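/- arXiv:1312.2834 — 3 statements merged into one kernel-verified Lean document; each statement's English description precedes it below -/
import Mathlib

section
/- Uniform bound after the initial layer: Let E be a real Banach space, β > 0, T ≥ 1, let G : ℝ → E be continuous on [0, T] with ‖G(s)‖ ≤ M for all s ∈ [0, T], and let v : ℝ → E be differentiable on [0, T] with β·v'(t) + v(t) = G(t) for all t ∈ [0, T]. Then for every t with 1 ≤ t ≤ T: ‖v(t)‖ ≤ √β·‖v(0)‖ + M. (In particular this uses the elementary fact e^{−t/β} ≤ e^{−1/β} ≤ √β valid for all β > 0 and t ≥ 1.) -/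
open Real Set

/-- Uniform bound after the initial layer for the damped equation `β v' + v = G`. -/
theorem uniform_bound_after_layer {E : Type*} [NormedAddCommGroup E] [NormedSpace ℝ E]
    [CompleteSpace E]
    (β T M : ℝ) (hβ : 0 < β) (hT : 1 ≤ T) (G v v' : ℝ → E)
    (hG : ContinuousOn G (Set.Icc 0 T))
    (hGM : ∀ s ∈ Set.Icc (0 : ℝ) T, ‖G s‖ ≤ M)
    (hv : ∀ t ∈ Set.Icc (0 : ℝ) T, HasDerivAt v (v' t) t)
    (hode : ∀ t ∈ Set.Icc (0 : ℝ) T, β • v' t + v t = G t) :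
    ∀ t, 1 ≤ t → t ≤ T → ‖v t‖ ≤ Real.sqrt β * ‖v 0‖ + M := by
  have hM0 : 0 ≤ M := le_trans (norm_nonneg _) (hGM 0 ⟨le_refl 0, le_trans zero_le_one hT⟩)
  set w : ℝ → E := fun t => Real.exp (t / β) • v t with hw
  set W : ℝ → E := fun t => (β⁻¹ * Real.exp (t / β)) • G t with hW
  set B : ℝ → ℝ := fun t => ‖v 0‖ + M * (Real.exp (t / β) - 1) with hB
  set B' : ℝ → ℝ := fun t => M * (Real.exp (t / β) * (1 / β)) with hB'
  have hexp : ∀ x : ℝ, HasDerivAt (fun t => Real.exp (t / β))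
      (Real.exp (x / β) * (1 / β)) x := fun x => ((hasDerivAt_id x).div_const β).exp
  have hwderiv : ∀ x ∈ Set.Icc (0 : ℝ) T, HasDerivAt w (W x) x := by
    intro x hx
    have h := (hexp x).smul (hv x hx)
    have hGx : G x = β • v' x + v x := (hode x hx).symm
    have heq : Real.exp (x / β) • v' x + (Real.exp (x / β) * (1 / β)) • v x = W x := by
      simp only [hW]
      rw [hGx, smul_add, smul_smul]
      have e1 : β⁻¹ * Real.exp (x / β) * β = Real.exp (x / β) := by field_simp
      have e2 : β⁻¹ * Real.exp (x / β) = Real.exp (x / β) * (1 / β) := by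
        rw [one_div, mul_comm]
      rw [e1, e2]
    rwa [heq] at h
  have hwcont : ContinuousOn w (Set.Icc 0 T) := fun x hx =>
    ((hwderiv x hx).continuousAt).continuousWithinAt
  have hBderiv : ∀ x : ℝ, HasDerivAt B (B' x) x := by
    intro x
    exact (((hexp x).sub_const 1).const_mul M).const_add ‖v 0‖
  have key : ∀ x ∈ Set.Icc (0 : ℝ) T, ‖w x‖ ≤ B x := by
    apply image_norm_le_of_norm_deriv_right_le_deriv_boundary hwcont
      (fun x hx => (hwderiv x (Set.mem_Icc_of_Ico hx)).hasDerivWithinAt)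
      _ hBderiv
    · intro x hx
      have hxT : x ∈ Set.Icc (0 : ℝ) T := Set.mem_Icc_of_Ico hx
      have h1 : ‖W x‖ = β⁻¹ * Real.exp (x / β) * ‖G x‖ := by
        rw [hW, norm_smul, Real.norm_eq_abs, abs_of_pos
          (mul_pos (inv_pos.mpr hβ) (Real.exp_pos _))]
      have h2 : β⁻¹ * Real.exp (x / β) * ‖G x‖ ≤ β⁻¹ * Real.exp (x / β) * M :=
        mul_le_mul_of_nonneg_left (hGM x hxT) (by positivity)
      rw [h1, hB']
      calc β⁻¹ * Real.exp (x / β) * ‖G x‖ ≤ β⁻¹ * Real.exp (x / β) * M := h2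
        _ = M * (Real.exp (x / β) * (1 / β)) := by field_simp
    · simp [hw, hB, norm_smul]
  intro t ht1 htT
  have htmem : t ∈ Set.Icc (0 : ℝ) T := ⟨le_trans zero_le_one ht1, htT⟩
  have hwt := key t htmem
  have hvw : v t = Real.exp (-(t / β)) • w t := by
    rw [hw, smul_smul, ← Real.exp_add, neg_add_cancel, Real.exp_zero, one_smul]
  have hnorm : ‖v t‖ = Real.exp (-(t / β)) * ‖w t‖ := by
    rw [hvw, norm_smul, Real.norm_eq_abs, abs_of_pos (Real.exp_pos _)]
  have h0 : (0:ℝ) < 1 / β := by positivity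
  have hexple : Real.exp (-(t / β)) ≤ Real.sqrt β := by
    have h1 : Real.exp (-(t / β)) ≤ Real.exp (-(1 / β)) := by
      apply Real.exp_le_exp.mpr
      have : 1 / β ≤ t / β := by gcongr
      linarith
    refine h1.trans ?_
    have hge : 1 / β ≤ Real.exp (2 / β) := by
      have hadd := Real.add_one_le_exp (2 / β)
      have h2b : 2 / β = 2 * (1 / β) := by ring
      linarith
    have hb : Real.exp (-(2 / β)) ≤ β := by
      rw [Real.exp_neg]
      have hinv : (Real.exp (2 / β))⁻¹ ≤ (1 / β)⁻¹ := inv_anti₀ h0 hge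
      rwa [one_div, inv_inv] at hinv
    have hsq : Real.exp (-(1 / β)) = Real.sqrt (Real.exp (-(2 / β))) := by
      rw [show -(2 / β) = -(1 / β) + -(1 / β) by ring, Real.exp_add,
        Real.sqrt_mul_self (Real.exp_nonneg _)]
    rw [hsq]
    exact Real.sqrt_le_sqrt hb
  have hmul : Real.exp (-(t / β)) * Real.exp (t / β) = 1 := by
    rw [← Real.exp_add]; simp
  calc ‖v t‖ = Real.exp (-(t / β)) * ‖w t‖ := hnorm
    _ ≤ Real.exp (-(t / β)) * B t :=
        mul_le_mul_of_nonneg_left hwt (Real.exp_nonneg _)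
    _ = Real.exp (-(t / β)) * ‖v 0‖ + M * (Real.exp (-(t / β)) * Real.exp (t / β))
        - Real.exp (-(t / β)) * M := by rw [hB]; ring
    _ = Real.exp (-(t / β)) * ‖v 0‖ + M - Real.exp (-(t / β)) * M := by rw [hmul]; ring
    _ ≤ Real.sqrt β * ‖v 0‖ + M := by
        nlinarith [Real.exp_nonneg (-(t / β)), norm_nonneg (v 0), Real.sqrt_nonneg β]
end

section
/- There exists a constant C > 0, depending only on β₀ > 0, such that for all β₁, β₂ with 0 < β₂ < β₁ ≤ β₀ and all t ≥ 1: β₂·(√(β₂/β₁)·e^{−t/β₁} − e^{−t/β₂})² ≤ C·t·(β₁ − β₂)/β₁². -/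
open Real

set_option maxHeartbeats 2000000 in
theorem mean_velocity_difference_estimate_aux (β₀ : ℝ) (hβ₀ : 0 < β₀) :
    ∃ C > (0 : ℝ), ∀ β₁ β₂ t : ℝ, 0 < β₂ → β₂ < β₁ → β₁ ≤ β₀ → 1 ≤ t →
      β₂ * (Real.sqrt (β₂ / β₁) * Real.exp (-t / β₁) - Real.exp (-t / β₂)) ^ 2
        ≤ C * t * (β₁ - β₂) / β₁ ^ 2 := by
  refine ⟨2 * β₀ + 2 * β₀ ^ 2, by positivity, ?_⟩
  intro β₁ β₂ t hβ₂ h12 h1β₀ ht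
  have hβ₁ : 0 < β₁ := hβ₂.trans h12
  have ht0 : 0 < t := lt_of_lt_of_le one_pos ht
  set a := Real.sqrt (β₂ / β₁) with ha
  have ha0 : 0 ≤ a := Real.sqrt_nonneg _
  have hr0 : (0:ℝ) ≤ β₂ / β₁ := by positivity
  have hr1 : β₂ / β₁ ≤ 1 := by rw [div_le_one hβ₁]; linarith
  have ha2 : a ^ 2 = β₂ / β₁ := Real.sq_sqrt hr0
  have ha1 : a ≤ 1 := by nlinarith
  have haL : β₂ / β₁ ≤ a := by nlinarith
  have h1a : (1 - a) * β₁ ≤ β₁ - β₂ := by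
    have : β₂ ≤ a * β₁ := by
      rw [div_le_iff₀ hβ₁] at haL; linarith
    nlinarith
  set x := t / β₁ with hxdef
  set y := t / β₂ with hydef
  have hx0 : 0 < x := by positivity
  have hy0 : 0 < y := by positivity
  have hxt : x * β₁ = t := div_mul_cancel₀ t hβ₁.ne'
  have hyt : y * β₂ = t := div_mul_cancel₀ t hβ₂.ne'
  have hxy : x ≤ y := by
    rw [hxdef, hydef]
    exact div_le_div_of_nonneg_left ht0.le hβ₂ h12.le
  set Δ := Real.exp (-x) - Real.exp (-y) with hΔ
  set E := Real.exp (-y) with hE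
  have hE0 : 0 < E := Real.exp_pos _
  have hE1 : E ≤ 1 := Real.exp_le_one_iff.mpr (by linarith)
  have hex1 : Real.exp (-x) ≤ 1 := Real.exp_le_one_iff.mpr (by linarith)
  have hΔ0 : 0 ≤ Δ := by
    have : Real.exp (-y) ≤ Real.exp (-x) := Real.exp_le_exp.mpr (by linarith)
    simp [hΔ, this]; linarith
  have hΔ1 : Δ ≤ 1 := by
    have := Real.exp_pos (-y); simp only [hΔ]; linarith
  have hΔ2 : Δ ≤ y - x := by
    have hsplit : Real.exp (-y) = Real.exp (-x) * Real.exp (x - y) := by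
      rw [← Real.exp_add]; ring_nf
    have hexp : (x - y) + 1 ≤ Real.exp (x - y) := Real.add_one_le_exp _
    have hexE : 0 < Real.exp (-x) := Real.exp_pos _
    simp only [hΔ, hsplit]
    nlinarith
  have hΔsq : Δ ^ 2 ≤ y - x := by nlinarith
  -- key algebraic identity: the difference equals a*Δ - (1-a)*E
  have hDid : a * Real.exp (-x) - E = a * Δ - (1 - a) * E := by
    simp only [hΔ, hE]; ring
  have hxneg : -t / β₁ = -x := by rw [hxdef]; ring
  have hyneg : -t / β₂ = -y := by rw [hydef]; ring
  clear_value a x y Δ E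
  rw [hxneg, hyneg, le_div_iff₀ (by positivity : (0:ℝ) < β₁ ^ 2), ← hE, hDid]
  have hterm1 : β₂ * Δ ^ 2 * β₁ ^ 2 ≤ β₀ * t * (β₁ - β₂) := by
    nlinarith [mul_le_mul_of_nonneg_left hΔsq (by positivity : (0:ℝ) ≤ β₂ * β₁ ^ 2),
      mul_pos hβ₂ hβ₁, mul_pos ht0 (sub_pos.mpr h12)]
  have hterm2 : β₂ * ((1 - a) * E) ^ 2 * β₁ ^ 2 ≤ β₀ ^ 2 * t * (β₁ - β₂) := by
    have h1a0 : 0 ≤ 1 - a := by linarith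
    have hsub0 : (0:ℝ) ≤ β₁ - β₂ := by linarith
    have hE2 : E ^ 2 ≤ 1 := pow_le_one₀ hE0.le hE1
    have h0 : 0 ≤ (1 - a) * β₁ := by positivity
    have hq2 : ((1 - a) * β₁) ^ 2 ≤ (β₁ - β₂) ^ 2 := pow_le_pow_left₀ h0 h1a 2
    have hq : ((1 - a) * E) ^ 2 * β₁ ^ 2 ≤ (β₁ - β₂) ^ 2 := by
      calc ((1 - a) * E) ^ 2 * β₁ ^ 2 = ((1 - a) * β₁) ^ 2 * E ^ 2 := by ring
        _ ≤ ((1 - a) * β₁) ^ 2 * 1 := mul_le_mul_of_nonneg_left hE2 (sq_nonneg _)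
        _ = ((1 - a) * β₁) ^ 2 := mul_one _
        _ ≤ (β₁ - β₂) ^ 2 := hq2
    have h2 : β₂ * (((1 - a) * E) ^ 2 * β₁ ^ 2) ≤ β₂ * (β₁ - β₂) ^ 2 :=
      mul_le_mul_of_nonneg_left hq hβ₂.le
    have h3 : β₂ * (β₁ - β₂) ^ 2 ≤ β₀ ^ 2 * (β₁ - β₂) := by
      have e1 : β₂ * (β₁ - β₂) ≤ β₀ * β₀ :=
        mul_le_mul (by linarith) (by linarith) hsub0 hβ₀.le
      calc β₂ * (β₁ - β₂) ^ 2 = β₂ * (β₁ - β₂) * (β₁ - β₂) := by ring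
        _ ≤ β₀ * β₀ * (β₁ - β₂) := mul_le_mul_of_nonneg_right e1 hsub0
        _ = β₀ ^ 2 * (β₁ - β₂) := by ring
    have h4 : β₀ ^ 2 * (β₁ - β₂) ≤ β₀ ^ 2 * t * (β₁ - β₂) := by
      have : β₀ ^ 2 ≤ β₀ ^ 2 * t := le_mul_of_one_le_right (by positivity) ht
      exact mul_le_mul_of_nonneg_right this hsub0
    calc β₂ * ((1 - a) * E) ^ 2 * β₁ ^ 2 = β₂ * (((1 - a) * E) ^ 2 * β₁ ^ 2) := by ring
      _ ≤ β₂ * (β₁ - β₂) ^ 2 := h2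
      _ ≤ β₀ ^ 2 * (β₁ - β₂) := h3
      _ ≤ β₀ ^ 2 * t * (β₁ - β₂) := h4
  have hDsq : (a * Δ - (1 - a) * E) ^ 2 ≤ 2 * Δ ^ 2 + 2 * ((1 - a) * E) ^ 2 := by
    have hp : (a * Δ) ^ 2 ≤ Δ ^ 2 :=
      pow_le_pow_left₀ (mul_nonneg ha0 hΔ0) (mul_le_of_le_one_left hΔ0 ha1) 2
    have key : (a * Δ - (1 - a) * E) ^ 2 ≤ 2 * (a * Δ) ^ 2 + 2 * ((1 - a) * E) ^ 2 := by
      nlinarith [sq_nonneg (a * Δ + (1 - a) * E)]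
    linarith
  have hmul := mul_le_mul_of_nonneg_left hDsq (by positivity : (0:ℝ) ≤ β₂ * β₁ ^ 2)
  have hfin : β₂ * (a * Δ - (1 - a) * E) ^ 2 * β₁ ^ 2
      ≤ 2 * (β₂ * Δ ^ 2 * β₁ ^ 2) + 2 * (β₂ * ((1 - a) * E) ^ 2 * β₁ ^ 2) := by
    nlinarith [hmul]
  linarith [hfin, hterm1, hterm2]


/-- Hölder-type estimate on the mean of the velocity difference. -/
theorem mean_velocity_difference_estimate (β₀ : ℝ) (hβ₀ : 0 < β₀) :
    ∃ C > (0 : ℝ), ∀ β₁ β₂ t : ℝ, 0 < β₂ → β₂ < β₁ → β₁ ≤ β₀ → 1 ≤ t →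
      β₂ * (Real.sqrt (β₂ / β₁) * Real.exp (-t / β₁) - Real.exp (-t / β₂)) ^ 2
        ≤ C * t * (β₁ - β₂) / β₁ ^ 2 :=
  mean_velocity_difference_estimate_aux β₀ hβ₀
end

section
/- Fix ε ∈ ℝ and set F(y) = (1−ε)/2·y² + (1/4)·y⁴ and f(y) = y³ + (1−ε)·y. Then there exist constants C₂, C₃ > 0, depending only on ε, such that for every M ∈ ℝ there is a constant C₄ > 0 (depending on ε and M) with f(y)·(y − M) ≥ −C₂·(y − M)² + C₃·F(y) − C₄ for all y ∈ ℝ. -/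
/-- Pointwise coercivity estimate for the nonlinearity `f(y) = y³ + (1-ε)y`
against the potential `F(y) = (1-ε)/2·y² + (1/4)·y⁴`. -/
theorem pointwise_coercivity (ε : ℝ) :
    ∃ C₂ > (0 : ℝ), ∃ C₃ > (0 : ℝ), ∀ M : ℝ, ∃ C₄ > (0 : ℝ), ∀ y : ℝ,
      (y ^ 3 + (1 - ε) * y) * (y - M)
        ≥ -C₂ * (y - M) ^ 2 + C₃ * ((1 - ε) / 2 * y ^ 2 + (1 / 4) * y ^ 4) - C₄ := by
  refine ⟨1, one_pos, 2, two_pos, fun M => ⟨2 * (M ^ 2 + 1) ^ 2 + (2 * M + M * (1 - ε)) ^ 2 + M ^ 2 + 4, by positivity, fun y => ?_⟩⟩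
  nlinarith [sq_nonneg (y ^ 2 - M * y), sq_nonneg (y ^ 2 * 1 - 2 * (M ^ 2 + 1)),
    sq_nonneg (y - (2 * M + M * (1 - ε))), sq_nonneg (y ^ 2 - 2), sq_nonneg y,
    sq_nonneg (y - M), sq_nonneg (2 * M + M * (1 - ε))]
end
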